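/- The column vectors |ψ_1⟩ = (z^1, −z̄^2, z^3, −z̄^4)^t and |ψ_2⟩ = (z^2, z̄^1, z^4, z̄^3)^t in A(S^7_{θ'})^4 satisfy ⟨ψ_k | ψ_l⟩ = δ_{kl}, where ⟨ξ|η⟩ = Σ_j ξ_j* η_j. Consequently the 4×4 matrix p = |ψ_1⟩⟨ψ_1| + |ψ_2⟩⟨ψ_2| satisfies p² = p = p*. -/

import Mathlib

noncomputable section

/-- The deformation matrix λ'^{ij} of the sphere S^7_{θ'}: λ'^{12}=λ'^{34}=1 and
λ'^{13}=λ'^{14}=λ'^{23}=λ'^{24}=μ (indices 0-based), with λ'^{ji} = (λ'^{ij})⁻¹. -/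
def lam7 (μ : ℂ) (i j : Fin 4) : ℂ :=
  if ((i : ℕ) < 2 ∧ (j : ℕ) < 2) ∨ (2 ≤ (i : ℕ) ∧ 2 ≤ (j : ℕ)) then 1
  else if (i : ℕ) < 2 then μ else μ⁻¹

variable {A : Type} [Ring A] [Algebra ℂ A] [StarRing A] [StarModule ℂ A]

/-- The defining relations of A(S^7_{θ'}): commutation relations among the generators and
their adjoints, and the sphere relation Σ_i z^i z̄^i = 1. -/
def S7Rel (μ : ℂ) (z : Fin 4 → A) : Prop :=
  (∀ i j, z i * z j = lam7 μ i j • (z j * z i)) ∧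
  (∀ i j, star (z i) * z j = lam7 μ j i • (z j * star (z i))) ∧
  (∀ i j, star (z i) * star (z j) = lam7 μ i j • (star (z j) * star (z i))) ∧
  (∑ i, z i * star (z i)) = 1

/-- α = 2(z^1 z̄^3 + z^2 z̄^4). -/
def elA (z : Fin 4 → A) : A := 2 * (z 0 * star (z 2) + z 1 * star (z 3))

/-- β = 2(−z^1 z^4 + z^2 z^3). -/
def elB (z : Fin 4 → A) : A := 2 * (-(z 0 * z 3) + z 1 * z 2)

/-- x = z^1 z̄^1 + z^2 z̄^2 − z^3 z̄^3 − z^4 z̄^4. -/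
def elX (z : Fin 4 → A) : A :=
  z 0 * star (z 0) + z 1 * star (z 1) - z 2 * star (z 2) - z 3 * star (z 3)

/-- |ψ_1⟩ = (z^1, −z̄^2, z^3, −z̄^4)^t. -/
def psi1 (z : Fin 4 → A) : Fin 4 → A := ![z 0, -star (z 1), z 2, -star (z 3)]

/-- |ψ_2⟩ = (z^2, z̄^1, z^4, z̄^3)^t. -/
def psi2 (z : Fin 4 → A) : Fin 4 → A := ![z 1, star (z 0), z 3, star (z 2)]

/-- The projection p = |ψ_1⟩⟨ψ_1| + |ψ_2⟩⟨ψ_2| as a 4×4 matrix. -/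
def projP (z : Fin 4 → A) : Matrix (Fin 4) (Fin 4) A :=
  fun i j => psi1 z i * star (psi1 z j) + psi2 z i * star (psi2 z j)

/-- ⟨ψ_k|ψ_l⟩ = δ_{kl} for |ψ_1⟩ = (z^1,−z̄^2,z^3,−z̄^4)^t and
|ψ_2⟩ = (z^2,z̄^1,z^4,z̄^3)^t; consequently p = |ψ_1⟩⟨ψ_1| + |ψ_2⟩⟨ψ_2| satisfies
p² = p = p*. -/
theorem stmt6 (μ : ℂ) (z : Fin 4 → A) (hrel : S7Rel μ z) :
    (∑ j, star (psi1 z j) * psi1 z j) = 1 ∧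
    (∑ j, star (psi1 z j) * psi2 z j) = 0 ∧
    (∑ j, star (psi2 z j) * psi1 z j) = 0 ∧
    (∑ j, star (psi2 z j) * psi2 z j) = 1 ∧
    projP z * projP z = projP z ∧
    star (projP z) = projP z := by
  obtain ⟨h1, h2, h3, hs⟩ := hrel
  have comm : ∀ i j : Fin 4, lam7 μ j i = 1 → star (z i) * z j = z j * star (z i) := by
    intro i j hl
    have := h2 i j
    rw [hl, one_smul] at this
    exact this
  have l1 : ∀ i j : Fin 4, ((i : ℕ) < 2 ∧ (j : ℕ) < 2) ∨ (2 ≤ (i : ℕ) ∧ 2 ≤ (j : ℕ)) →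
      lam7 μ i j = 1 := by
    intro i j h
    rw [lam7, if_pos h]
  have e00 := comm 0 0 (l1 0 0 (by decide))
  have e11 := comm 1 1 (l1 1 1 (by decide))
  have e22 := comm 2 2 (l1 2 2 (by decide))
  have e33 := comm 3 3 (l1 3 3 (by decide))
  have e01 := comm 0 1 (l1 1 0 (by decide))
  have e10 := comm 1 0 (l1 0 1 (by decide))
  have e23 := comm 2 3 (l1 3 2 (by decide))
  have e32 := comm 3 2 (l1 2 3 (by decide))
  have hs' : z 0 * star (z 0) + z 1 * star (z 1) + z 2 * star (z 2) + z 3 * star (z 3) = 1 := by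
    simpa [Fin.sum_univ_four] using hs
  have S11 : (∑ j, star (psi1 z j) * psi1 z j) = 1 := by
    simp only [psi1, Fin.sum_univ_four, Matrix.cons_val_zero, Matrix.cons_val_one,
      Matrix.head_cons, Matrix.cons_val_two, Matrix.cons_val_three, Matrix.tail_cons,
      star_neg, star_star, neg_mul_neg]
    rw [e00, e22, ← hs']
  have S22 : (∑ j, star (psi2 z j) * psi2 z j) = 1 := by
    simp only [psi2, Fin.sum_univ_four, Matrix.cons_val_zero, Matrix.cons_val_one,
      Matrix.head_cons, Matrix.cons_val_two, Matrix.cons_val_three, Matrix.tail_cons,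
      star_star]
    rw [e11, e33, ← hs']
    abel
  have S12 : (∑ j, star (psi1 z j) * psi2 z j) = 0 := by
    simp only [psi1, psi2, Fin.sum_univ_four, Matrix.cons_val_zero, Matrix.cons_val_one,
      Matrix.head_cons, Matrix.cons_val_two, Matrix.cons_val_three, Matrix.tail_cons,
      star_neg, star_star, neg_mul]
    rw [e01, e23]
    abel
  have S21 : (∑ j, star (psi2 z j) * psi1 z j) = 0 := by
    simp only [psi1, psi2, Fin.sum_univ_four, Matrix.cons_val_zero, Matrix.cons_val_one,
      Matrix.head_cons, Matrix.cons_val_two, Matrix.cons_val_three, Matrix.tail_cons,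
      star_star, mul_neg]
    rw [e10, e32]
    abel
  have hmul : projP z * projP z = projP z := by
    ext i j
    rw [Matrix.mul_apply]
    have expand : ∀ k, projP z i k * projP z k j =
        psi1 z i * (star (psi1 z k) * psi1 z k) * star (psi1 z j)
        + psi1 z i * (star (psi1 z k) * psi2 z k) * star (psi2 z j)
        + psi2 z i * (star (psi2 z k) * psi1 z k) * star (psi1 z j)
        + psi2 z i * (star (psi2 z k) * psi2 z k) * star (psi2 z j) := by
      intro k
      simp only [projP]
      noncomm_ring
    calc (∑ k, projP z i k * projP z k j)
        = (∑ k, psi1 z i * (star (psi1 z k) * psi1 z k) * star (psi1 z j))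
        + (∑ k, psi1 z i * (star (psi1 z k) * psi2 z k) * star (psi2 z j))
        + (∑ k, psi2 z i * (star (psi2 z k) * psi1 z k) * star (psi1 z j))
        + (∑ k, psi2 z i * (star (psi2 z k) * psi2 z k) * star (psi2 z j)) := by
          simp only [expand, Finset.sum_add_distrib]
      _ = psi1 z i * (∑ k, star (psi1 z k) * psi1 z k) * star (psi1 z j)
        + psi1 z i * (∑ k, star (psi1 z k) * psi2 z k) * star (psi2 z j)
        + psi2 z i * (∑ k, star (psi2 z k) * psi1 z k) * star (psi1 z j)
        + psi2 z i * (∑ k, star (psi2 z k) * psi2 z k) * star (psi2 z j) := by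
          simp only [Finset.mul_sum, Finset.sum_mul]
      _ = projP z i j := by
          rw [S11, S12, S21, S22]
          simp [projP]
  have hstar : star (projP z) = projP z := by
    ext i j
    simp [Matrix.star_apply, projP, star_add, star_mul, star_star]
  exact ⟨S11, S12, S21, S22, hmul, hstar⟩
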